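/- For any map of pairs f : (X, A) → (X, A) with f|_A = id_A, the composition i_* ∘ var(f) : H_n(X, A) → H_n(X, A) equals f_* − id on relative homology, where i_* is the map H_n(X) → H_n(X, A). -/
import Mathlib


/-- Chain-level formalization (Mathlib has no singular homology).  `C₂ → C₁ → C₀`
are singular chains of `X` in degrees `n+1, n, n−1`, `Aᵢ ⊆ Cᵢ` the chains of
`A ⊆ X`, and `f` the chain map of a map of pairs `f : (X,A) → (X,A)` with
`f|_A = id_A`.  `Habs = H_n(X)` and `Hrel = H_n(X, A)` are presented abstractly
by surjections `π` from (relative) cycles, with classes equal iff the difference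
is a (relative) boundary.  `j : H_n(X) → H_n(X, A)` is induced by inclusion,
`frel = f_* : H_n(X,A) → H_n(X,A)`, and `var : H_n(X,A) → H_n(X)` is the
homological variation `[c] ↦ [f c − c]`.  Conclusion: `i_* ∘ var = f_* − id` on
relative homology, where `i_* : H_n(X) → H_n(X,A)`. -/
theorem i_comp_variation_eq_f_sub_id
    {C₂ C₁ C₀ : Type} [AddCommGroup C₂] [AddCommGroup C₁] [AddCommGroup C₀]
    (d₂ : C₂ →+ C₁) (d₁ : C₁ →+ C₀)
    (A₁ : AddSubgroup C₁) (A₀ : AddSubgroup C₀)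
    (hdd : ∀ b : C₂, d₁ (d₂ b) = 0)
    (hdA₁ : ∀ a ∈ A₁, d₁ a ∈ A₀)
    (f₂ : C₂ →+ C₂) (f₁ : C₁ →+ C₁) (f₀ : C₀ →+ C₀)
    (hfd₂ : ∀ b : C₂, f₁ (d₂ b) = d₂ (f₂ b))
    (hfd₁ : ∀ c : C₁, f₀ (d₁ c) = d₁ (f₁ c))
    (hfA₁ : ∀ a ∈ A₁, f₁ a = a)
    (hfA₀ : ∀ a ∈ A₀, f₀ a = a)
    -- the homology groups `H_n(X)` and `H_n(X, A)`, presented abstractly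
    {Habs Hrel : Type} [AddCommGroup Habs] [AddCommGroup Hrel]
    (πabs : C₁ → Habs) (πrel : C₁ → Hrel)
    (πabs_surj : ∀ h : Habs, ∃ c : C₁, d₁ c = 0 ∧ πabs c = h)
    (πrel_surj : ∀ h : Hrel, ∃ c : C₁, d₁ c ∈ A₀ ∧ πrel c = h)
    (πabs_add : ∀ c c' : C₁, d₁ c = 0 → d₁ c' = 0 →
      πabs (c + c') = πabs c + πabs c')
    (πrel_add : ∀ c c' : C₁, d₁ c ∈ A₀ → d₁ c' ∈ A₀ →
      πrel (c + c') = πrel c + πrel c')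
    (πabs_eq : ∀ c c' : C₁, d₁ c = 0 → d₁ c' = 0 →
      (πabs c = πabs c' ↔ ∃ b : C₂, c - c' = d₂ b))
    (πrel_eq : ∀ c c' : C₁, d₁ c ∈ A₀ → d₁ c' ∈ A₀ →
      (πrel c = πrel c' ↔ ∃ b : C₂, ∃ a ∈ A₁, c - c' = d₂ b + a))
    -- the induced maps on homology
    (i : Habs →+ Hrel)
    (hi : ∀ c : C₁, d₁ c = 0 → i (πabs c) = πrel c)
    (frel : Hrel →+ Hrel)
    (hfrel : ∀ c : C₁, d₁ c ∈ A₀ → frel (πrel c) = πrel (f₁ c))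
    (var : Hrel →+ Habs)
    (hvar : ∀ c : C₁, d₁ c ∈ A₀ → var (πrel c) = πabs (f₁ c - c)) :
    i.comp var = frel - AddMonoidHom.id Hrel := by
  ext h
  obtain ⟨c, hc, rfl⟩ := πrel_surj h
  have hfc : d₁ (f₁ c - c) = 0 := by
    have := hfd₁ c
    rw [hfA₀ (d₁ c) hc] at this
    rw [map_sub, ← this, sub_self]
  have key : πrel (f₁ c) = πrel (f₁ c - c) + πrel c := by
    rw [← πrel_add (f₁ c - c) c (by rw [hfc]; exact A₀.zero_mem) hc, sub_add_cancel]
  simp only [AddMonoidHom.coe_comp, Function.comp_apply, AddMonoidHom.sub_apply,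
    AddMonoidHom.id_apply]
  rw [hvar c hc, hi _ hfc, hfrel c hc, key]
  abel
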